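/- arXiv:2211.13205 — 2 statements merged into one kernel-verified Lean document; each statement's English description precedes it below -/
import Mathlib

section
/- Let I = {I_m} be a filtration of a Noetherian ring R and \overline{I} = {\overline{I_m}} the filtration of integral closures of each ideal I_m. Then ν̄_I = ν̄_{\overline{I}}. -/
open Filter Topology Polynomial
open scoped ENNReal

/-- A filtration `I = {I_m}` of ideals of `R`: `I_0 = R`, `I_{n+1} ⊆ I_n`,
and `I_m · I_n ⊆ I_{m+n}`. -/
structure RingFiltration (R : Type*) [CommRing R] where
  I : ℕ → Ideal R
  top_eq : I 0 = ⊤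
  antitone_succ : ∀ n, I (n + 1) ≤ I n
  mul_le : ∀ m n, I m * I n ≤ I (m + n)

namespace RingFiltration
variable {R : Type*} [CommRing R] (F : RingFiltration R)

/-- The order function `ν_I(f) = sup {m : f ∈ I_m}`, viewed in `[0,∞]`. -/
noncomputable def nu (f : R) : ℝ≥0∞ :=
  sSup ((fun m : ℕ => (m : ℝ≥0∞)) '' {m | f ∈ F.I m})

/-- The asymptotic Samuel function `ν̄_I(f) = lim_n ν_I(f^n)/n` (the limit exists and
equals the limsup used here to define it). -/
noncomputable def nubar (f : R) : ℝ≥0∞ :=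
  Filter.limsup (fun n : ℕ => F.nu (f ^ n) / (n : ℝ≥0∞)) Filter.atTop

end RingFiltration

/-- The integral closure of an ideal `J`: the set of `x` satisfying an equation
`x^n + a_1 x^{n-1} + ⋯ + a_n = 0` with `a_i ∈ J^i`. -/
def Ideal.intCl {R : Type*} [CommRing R] (J : Ideal R) : Set R :=
  {x | ∃ n : ℕ, 0 < n ∧ ∃ a : ℕ → R, (∀ i ∈ Finset.Icc 1 n, a i ∈ J ^ i) ∧
    x ^ n + ∑ i ∈ Finset.Icc 1 n, a i * x ^ (n - i) = 0}

/-- Every element of `J` lies in the integral closure of `J`. -/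
lemma Ideal.subset_intCl' {R : Type*} [CommRing R] (J : Ideal R) : (J : Set R) ⊆ J.intCl := by
  intro x hx
  refine ⟨1, one_pos, fun _ => -x, ?_, ?_⟩
  · intro i hi
    simp only [Finset.Icc_self, Finset.mem_singleton] at hi
    subst hi
    simpa using J.neg_mem hx
  · simp

/-- If `x` is in the integral closure of `J` (witnessed by a degree-`n` equation), then
`x^(n-1+k) ∈ J^k` for all `k`. -/
lemma Ideal.pow_mem_of_intCl' {R : Type*} [CommRing R] (J : Ideal R) {x : R}
    (hx : x ∈ J.intCl) : ∃ n : ℕ, 0 < n ∧ ∀ k : ℕ, x ^ (n - 1 + k) ∈ J ^ k := by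
  obtain ⟨n, hn, a, ha, heq⟩ := hx
  refine ⟨n, hn, fun k => ?_⟩
  have hclaim : ∀ k : ℕ, ∃ c : ℕ → R, (∀ i < n, c i ∈ J ^ (k + (n - 1 - i))) ∧
      x ^ (n - 1 + k) = ∑ i ∈ Finset.range n, c i * x ^ i := by
    intro k
    induction k with
    | zero =>
      refine ⟨fun i => if i = n - 1 then 1 else 0, ?_, ?_⟩
      · intro i hi
        by_cases h : i = n - 1
        · have : 0 + (n - 1 - i) = 0 := by omega
          simp [h, this]
        · simp [h]
      · rw [add_zero]
        rw [Finset.sum_eq_single_of_mem (n - 1)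
          (Finset.mem_range.mpr (Nat.sub_lt hn one_pos))
          (fun b _ hb => by simp [hb])]
        simp
    | succ k ih =>
      obtain ⟨c, hc, hrep⟩ := ih
      refine ⟨fun i => (if i = 0 then 0 else c (i - 1)) - c (n - 1) * a (n - i), ?_, ?_⟩
      · intro i hi
        refine sub_mem ?_ ?_
        · by_cases h : i = 0
          · simp [h]
          · have h2 := hc (i - 1) (by omega)
            have : k + (n - 1 - (i - 1)) = k + 1 + (n - 1 - i) := by omega
            rw [this] at h2
            simpa [h] using h2
        · have h1 : c (n - 1) ∈ J ^ k := by
            have := hc (n - 1) (by omega)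
            simpa using this
          have h2 : a (n - i) ∈ J ^ (n - i) := ha _ (by simp [Finset.mem_Icc]; omega)
          have h3 : k + 1 + (n - 1 - i) = k + (n - i) := by omega
          rw [h3, pow_add]
          exact Ideal.mul_mem_mul h1 h2
      · have hbij : ∑ i ∈ Finset.range n, a (n - i) * x ^ i
            = ∑ j ∈ Finset.Icc 1 n, a j * x ^ (n - j) := by
          refine Finset.sum_nbij' (fun i => n - i) (fun j => n - j) ?_ ?_ ?_ ?_ ?_
          · intro i hi; simp only [Finset.mem_range] at hi; simp [Finset.mem_Icc]; omega
          · intro j hj; simp only [Finset.mem_Icc] at hj; simp [Finset.mem_range]; omega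
          · intro i hi; simp only [Finset.mem_range] at hi
            show n - (n - i) = i
            omega
          · intro j hj; simp only [Finset.mem_Icc] at hj
            show n - (n - j) = j
            omega
          · intro i hi; simp only [Finset.mem_range] at hi
            show a (n - i) * x ^ i = a (n - i) * x ^ (n - (n - i))
            have h4 : n - (n - i) = i := by omega
            rw [h4]
        have hstep : x ^ (n - 1 + (k + 1)) = (∑ i ∈ Finset.range n, c i * x ^ i) * x := by
          rw [← hrep, ← pow_succ, show n - 1 + (k + 1) = n - 1 + k + 1 from rfl]
        rw [hstep, Finset.sum_mul]
        have hsplit : ∀ i : ℕ, c i * x ^ i * x = c i * x ^ (i + 1) := by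
          intro i; rw [mul_assoc, ← pow_succ]
        rw [Finset.sum_congr rfl fun i _ => hsplit i]
        have hn1 : n = (n - 1) + 1 := by omega
        have e0 : ∑ i ∈ Finset.range n,
              ((if i = 0 then 0 else c (i - 1)) - c (n - 1) * a (n - i)) * x ^ i
            = (∑ i ∈ Finset.range n, (if i = 0 then 0 else c (i - 1)) * x ^ i)
              - ∑ i ∈ Finset.range n, c (n - 1) * a (n - i) * x ^ i := by
          rw [← Finset.sum_sub_distrib]
          exact Finset.sum_congr rfl fun i _ => by ring
        beta_reduce
        rw [e0]
        have e1 : ∑ i ∈ Finset.range n, (if i = 0 then 0 else c (i - 1)) * x ^ i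
            = ∑ i ∈ Finset.range (n - 1), c i * x ^ (i + 1) := by
          rw [hn1, Finset.sum_range_succ']
          simp
        have e2 : ∑ i ∈ Finset.range n, c i * x ^ (i + 1)
            = (∑ i ∈ Finset.range (n - 1), c i * x ^ (i + 1)) + c (n - 1) * x ^ n := by
          conv_lhs => rw [hn1, Finset.sum_range_succ]
          rw [← hn1]
        have e3 : ∑ i ∈ Finset.range n, c (n - 1) * a (n - i) * x ^ i
            = c (n - 1) * ∑ i ∈ Finset.range n, a (n - i) * x ^ i := by
          rw [Finset.mul_sum]
          exact Finset.sum_congr rfl fun i _ => by ring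
        rw [e1, e2, e3, hbij, eq_neg_of_add_eq_zero_right heq]
        ring
  obtain ⟨c, hc, hrep⟩ := hclaim k
  rw [hrep]
  refine Ideal.sum_mem _ fun i hi => ?_
  exact Ideal.mul_mem_right _ _
    (Ideal.pow_le_pow_right (Nat.le_add_right _ _) (hc i (Finset.mem_range.mp hi)))

/-- Powers of a filtration ideal land deep in the filtration. -/
lemma RingFiltration.pow_le' {R : Type*} [CommRing R] (F : RingFiltration R) (m k : ℕ) :
    F.I m ^ k ≤ F.I (m * k) := by
  induction k with
  | zero => simp [F.top_eq]
  | succ k ih =>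
    calc F.I m ^ (k + 1) = F.I m ^ k * F.I m := pow_succ _ _
    _ ≤ F.I (m * k) * F.I m := Ideal.mul_mono_left ih
    _ ≤ F.I (m * k + m) := F.mul_le _ _
    _ = F.I (m * (k + 1)) := by ring_nf

lemma RingFiltration.le_nu' {R : Type*} [CommRing R] (F : RingFiltration R) {f : R} {m : ℕ}
    (h : f ∈ F.I m) : (m : ℝ≥0∞) ≤ F.nu f :=
  le_sSup ⟨m, h, rfl⟩

/-- The tendsto computation for the ratio `(mk)/(N(n-1+k)) → m/N`. -/
lemma ratio_tendsto (m N n : ℕ) (hN : 1 ≤ N) :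
    Tendsto (fun k : ℕ => ((m * k : ℕ) : ℝ≥0∞) / ((N * (n - 1 + k) : ℕ) : ℝ≥0∞))
      atTop (𝓝 ((m : ℝ≥0∞) / (N : ℝ≥0∞))) := by
  have hNR : (0:ℝ) < (N:ℝ) := by positivity
  have hreal : Tendsto (fun k : ℕ => ((m:ℝ) * k) / ((N:ℝ) * ((n - 1 : ℕ) + k)))
      atTop (𝓝 ((m:ℝ) / N)) := by
    have h1 : Tendsto (fun k : ℕ => ((m:ℝ)/N) * ((k:ℝ) / ((k:ℝ) + ((n-1:ℕ):ℝ))))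
        atTop (𝓝 (((m:ℝ)/N) * 1)) :=
      tendsto_const_nhds.mul (tendsto_natCast_div_add_atTop ((n-1:ℕ):ℝ))
    rw [mul_one] at h1
    refine h1.congr fun k => ?_
    rw [div_mul_div_comm]
    ring_nf
  have hof := ENNReal.tendsto_ofReal hreal
  have heq : ENNReal.ofReal ((m:ℝ)/N) = (m : ℝ≥0∞) / (N : ℝ≥0∞) := by
    rw [ENNReal.ofReal_div_of_pos hNR, ENNReal.ofReal_natCast, ENNReal.ofReal_natCast]
  rw [heq] at hof
  refine hof.congr' ?_
  filter_upwards [eventually_ge_atTop 1] with k hk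
  have hd : (0:ℝ) < (N:ℝ) * ((n-1:ℕ) + k) := by positivity
  have key : ((m * k : ℕ) : ℝ≥0∞) / ((N * (n - 1 + k) : ℕ) : ℝ≥0∞)
      = ENNReal.ofReal ((m:ℝ) * k / ((N:ℝ) * ((n-1:ℕ) + k))) := ?_
  exact key.symm
  have c1 : ((m:ℝ) * k) = ((m * k : ℕ) : ℝ) := by push_cast; ring
  have c2 : ((N:ℝ) * (((n-1:ℕ):ℝ) + k)) = ((N * (n - 1 + k) : ℕ) : ℝ) := by push_cast; ring
  rw [ENNReal.ofReal_div_of_pos hd, c1, c2, ENNReal.ofReal_natCast, ENNReal.ofReal_natCast]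

/-- Let `I = {I_m}` be a filtration of a Noetherian ring `R` and `\bar{I} = {\bar{I_m}}`
the filtration of integral closures of each `I_m`.  Then `ν̄_I = ν̄_{\bar{I}}`. -/
theorem nubar_eq_nubar_bar {R : Type*} [CommRing R] [IsNoetherianRing R]
    (F G : RingFiltration R)
    (hG : ∀ m, (G.I m : Set R) = Ideal.intCl (F.I m)) (x : R) :
    F.nubar x = G.nubar x := by
  have hle : ∀ m, F.I m ≤ G.I m := by
    intro m y hy
    have h1 : y ∈ Ideal.intCl (F.I m) := Ideal.subset_intCl' (F.I m) hy
    rw [← hG m] at h1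
    exact h1
  apply le_antisymm
  · refine Filter.limsup_le_limsup (Eventually.of_forall fun n => ?_)
    refine ENNReal.div_le_div_right ?_ _
    exact sSup_le_sSup (Set.image_mono fun m hm => hle m hm)
  · -- G.nubar x ≤ F.nubar x
    refine Filter.limsup_le_of_le (by isBoundedDefault) ?_
    filter_upwards [Filter.eventually_ge_atTop 1] with N hN
    have hN0 : (N : ℝ≥0∞) ≠ 0 := Nat.cast_ne_zero.mpr (by omega)
    have hNt : (N : ℝ≥0∞) ≠ ⊤ := ENNReal.natCast_ne_top N
    rw [ENNReal.div_le_iff hN0 hNt]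
    refine sSup_le ?_
    rintro _ ⟨m, hm, rfl⟩
    have hm' : x ^ N ∈ Ideal.intCl (F.I m) := by
      rw [← hG m]
      exact hm
    -- key : (m : ℝ≥0∞) / N ≤ F.nubar x
    have key : (m : ℝ≥0∞) / (N : ℝ≥0∞) ≤ F.nubar x := by
      obtain ⟨n, hn, hpow⟩ := Ideal.pow_mem_of_intCl' (F.I m) hm'
      have hmem : ∀ k : ℕ, x ^ (N * (n - 1 + k)) ∈ F.I (m * k) := by
        intro k
        rw [pow_mul]
        exact F.pow_le' m k (hpow k)
      have hnu : ∀ k : ℕ, ((m * k : ℕ) : ℝ≥0∞)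
          ≤ F.nu (x ^ (N * (n - 1 + k))) := fun k => F.le_nu' (hmem k)
      set u : ℕ → ℝ≥0∞ := fun M => F.nu (x ^ M) / (M : ℝ≥0∞) with hu
      set g : ℕ → ℕ := fun k => N * (n - 1 + k) with hgdef
      have hg : Tendsto g atTop atTop := by
        refine tendsto_atTop_mono (fun k => ?_) tendsto_id
        calc (k : ℕ) ≤ n - 1 + k := Nat.le_add_left _ _
        _ ≤ N * (n - 1 + k) := Nat.le_mul_of_pos_left _ (by omega)
      have h1 : Filter.limsup u (Filter.map g atTop) ≤ Filter.limsup u atTop :=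
        Filter.limsup_le_limsup_of_le hg
      have h2 : Filter.limsup (u ∘ g) atTop = Filter.limsup u (Filter.map g atTop) :=
        Filter.limsup_comp u g atTop
      have h3 : Filter.liminf (u ∘ g) atTop ≤ Filter.limsup (u ∘ g) atTop :=
        Filter.liminf_le_limsup
      have h4 : Filter.liminf (fun k : ℕ => ((m * k : ℕ) : ℝ≥0∞)
          / ((N * (n - 1 + k) : ℕ) : ℝ≥0∞)) atTop ≤ Filter.liminf (u ∘ g) atTop := by
        refine Filter.liminf_le_liminf (Eventually.of_forall fun k => ?_)
        exact ENNReal.div_le_div_right (hnu k) _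
      have h5 : Filter.liminf (fun k : ℕ => ((m * k : ℕ) : ℝ≥0∞)
          / ((N * (n - 1 + k) : ℕ) : ℝ≥0∞)) atTop = (m : ℝ≥0∞) / (N : ℝ≥0∞) :=
        (ratio_tendsto m N n hN).liminf_eq
      calc (m : ℝ≥0∞) / (N : ℝ≥0∞) = _ := h5.symm
      _ ≤ Filter.liminf (u ∘ g) atTop := h4
      _ ≤ Filter.limsup (u ∘ g) atTop := h3
      _ = Filter.limsup u (Filter.map g atTop) := h2
      _ ≤ Filter.limsup u atTop := h1
    calc (m : ℝ≥0∞) = (m : ℝ≥0∞) / (N : ℝ≥0∞) * (N : ℝ≥0∞) :=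
        (ENNReal.div_mul_cancel hN0 hNt).symm
    _ ≤ F.nubar x * (N : ℝ≥0∞) := mul_le_mul_left key _
end

section
/- Let I and J be filtrations of a Noetherian ring R and α ∈ ℝ_{>0}. Then ν̄_I = α·ν̄_J if and only if K(I^(α)) = K(J), where I^(α) is the twist of I by α and K denotes the saturation K(F)_m = {f : ν̄_F(f) ≥ m}. -/
open Filter Topology Polynomial
open scoped ENNReal

namespace RingFiltration
variable {R : Type*} [CommRing R] (F : RingFiltration R)

lemma antitone_I : Antitone F.I := antitone_nat_of_succ_le F.antitone_succ

lemma le_nu {f : R} {m : ℕ} (h : f ∈ F.I m) : (m : ℝ≥0∞) ≤ F.nu f :=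
  le_sSup ⟨m, h, rfl⟩

lemma mem_of_le_nu {f : R} {m : ℕ} (h : (m : ℝ≥0∞) ≤ F.nu f) : f ∈ F.I m := by
  by_contra hm
  have hm0 : m ≠ 0 := by
    rintro rfl
    exact hm (by rw [F.top_eq]; trivial)
  have hb : F.nu f ≤ ((m - 1 : ℕ) : ℝ≥0∞) := by
    apply sSup_le
    rintro x ⟨n, hn, rfl⟩
    have hnm : n < m := by
      by_contra hnm
      exact hm (F.antitone_I (not_lt.1 hnm) hn)
    show ((n:ℕ) : ℝ≥0∞) ≤ _
    exact_mod_cast Nat.le_sub_one_of_lt hnm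
  have h2 : (m : ℝ≥0∞) ≤ ((m - 1 : ℕ) : ℝ≥0∞) := h.trans hb
  have : m ≤ m - 1 := by exact_mod_cast h2
  omega

lemma pow_mem {f : R} {m : ℕ} (h : f ∈ F.I m) : ∀ k, f ^ k ∈ F.I (k * m) := by
  intro k
  induction k with
  | zero => rw [pow_zero, Nat.zero_mul, F.top_eq]; trivial
  | succ k ih =>
    have h1 : f ^ k * f ∈ F.I (k * m) * F.I m := Ideal.mul_mem_mul ih h
    have h2 := F.mul_le (k * m) m h1
    rw [pow_succ]
    have he : (k + 1) * m = k * m + m := by ring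
    rw [he]
    exact h2

lemma nu_pow_le (f : R) (k : ℕ) : (k : ℝ≥0∞) * F.nu f ≤ F.nu (f ^ k) := by
  rw [nu, ENNReal.mul_sSup]
  refine iSup₂_le ?_
  rintro x ⟨m, hm, rfl⟩
  calc (k : ℝ≥0∞) * (m : ℝ≥0∞) = ((k * m : ℕ) : ℝ≥0∞) := by push_cast; ring
    _ ≤ F.nu (f ^ k) := F.le_nu (F.pow_mem hm k)

lemma nubar_eq_iSup (f : R) :
    F.nubar f = ⨆ n : ℕ, F.nu (f ^ (n + 1)) / ((n + 1 : ℕ) : ℝ≥0∞) := by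
  apply le_antisymm
  · apply Filter.limsup_le_of_le (by isBoundedDefault)
    filter_upwards [Filter.eventually_ge_atTop 1] with n hn
    obtain ⟨j, rfl⟩ : ∃ j, n = j + 1 := ⟨n - 1, by omega⟩
    exact le_iSup (fun n : ℕ => F.nu (f ^ (n + 1)) / ((n + 1 : ℕ) : ℝ≥0∞)) j
  · refine iSup_le fun n => ?_
    apply Filter.le_limsup_of_frequently_le'
    rw [Filter.frequently_atTop]
    intro a
    refine ⟨(n + 1) * (a + 1), by nlinarith, ?_⟩
    have hpow : f ^ ((n + 1) * (a + 1)) = (f ^ (n + 1)) ^ (a + 1) := by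
      rw [← pow_mul]
    have h1 : ((a + 1 : ℕ) : ℝ≥0∞) * F.nu (f ^ (n + 1)) ≤ F.nu (f ^ ((n + 1) * (a + 1))) := by
      rw [hpow]
      exact F.nu_pow_le (f ^ (n + 1)) (a + 1)
    have hc : (((n + 1) * (a + 1) : ℕ) : ℝ≥0∞) = ((a + 1 : ℕ) : ℝ≥0∞) * ((n + 1 : ℕ) : ℝ≥0∞) := by
      push_cast; ring
    calc F.nu (f ^ (n + 1)) / ((n + 1 : ℕ) : ℝ≥0∞)
        = ((a + 1 : ℕ) : ℝ≥0∞) * F.nu (f ^ (n + 1)) /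
            (((a + 1 : ℕ) : ℝ≥0∞) * ((n + 1 : ℕ) : ℝ≥0∞)) := by
          rw [ENNReal.mul_div_mul_left _ _ (by simp) (by simp)]
      _ ≤ F.nu (f ^ ((n + 1) * (a + 1))) / (((n + 1) * (a + 1) : ℕ) : ℝ≥0∞) := by
          rw [hc]; exact ENNReal.div_le_div_right h1 _

lemma nubar_pow (f : R) (k : ℕ) :
    F.nubar (f ^ (k + 1)) = ((k + 1 : ℕ) : ℝ≥0∞) * F.nubar f := by
  rw [nubar_eq_iSup, nubar_eq_iSup, ENNReal.mul_iSup]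
  apply le_antisymm
  · refine iSup_le fun n => ?_
    refine le_trans ?_ (le_iSup (fun j : ℕ => ((k + 1 : ℕ) : ℝ≥0∞) *
      (F.nu (f ^ (j + 1)) / ((j + 1 : ℕ) : ℝ≥0∞))) ((k + 1) * (n + 1) - 1))
    have hj : (k + 1) * (n + 1) - 1 + 1 = (k + 1) * (n + 1) := by
      have : 1 ≤ (k + 1) * (n + 1) := Nat.one_le_iff_ne_zero.2 (by positivity)
      omega
    rw [hj, ← pow_mul, ← mul_div_assoc]
    rw [show (((k + 1) * (n + 1) : ℕ) : ℝ≥0∞) = ((k + 1 : ℕ) : ℝ≥0∞) * ((n + 1 : ℕ) : ℝ≥0∞) by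
      push_cast; ring]
    rw [ENNReal.mul_div_mul_left _ _ (by simp) (by simp)]
  · refine iSup_le fun n => ?_
    refine le_trans ?_ (le_iSup (fun j : ℕ => F.nu ((f ^ (k + 1)) ^ (j + 1)) /
      ((j + 1 : ℕ) : ℝ≥0∞)) n)
    rw [← mul_div_assoc]
    refine ENNReal.div_le_div_right ?_ _
    rw [show (f ^ (k + 1)) ^ (n + 1) = (f ^ (n + 1)) ^ (k + 1) by
      rw [← pow_mul, ← pow_mul, mul_comm]]
    exact F.nu_pow_le (f ^ (n + 1)) (k + 1)

end RingFiltration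

section Twist
variable {R : Type*} [CommRing R]

lemma nu_twist_le (F FA : RingFiltration R) (α : ℝ) (hα : 0 < α)
    (hFA : ∀ m : ℕ, FA.I m = F.I ⌈α * m⌉₊) (g : R) :
    ENNReal.ofReal α * FA.nu g ≤ F.nu g := by
  rw [RingFiltration.nu, ENNReal.mul_sSup]
  refine iSup₂_le ?_
  rintro x ⟨m, hm, rfl⟩
  have hm' : g ∈ F.I ⌈α * m⌉₊ := by rw [← hFA]; exact hm
  calc ENNReal.ofReal α * ((m : ℕ) : ℝ≥0∞) = ENNReal.ofReal (α * m) := by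
        rw [ENNReal.ofReal_mul hα.le, ENNReal.ofReal_natCast]
    _ ≤ ((⌈α * m⌉₊ : ℕ) : ℝ≥0∞) := by
        rw [← ENNReal.ofReal_natCast]
        exact ENNReal.ofReal_le_ofReal (Nat.le_ceil _)
    _ ≤ F.nu g := F.le_nu hm'

lemma div_le_twist_nubar (F FA : RingFiltration R) (α : ℝ) (hα : 0 < α)
    (hFA : ∀ m : ℕ, FA.I m = F.I ⌈α * m⌉₊) (f : R) (n m : ℕ)
    (h : f ^ (n + 1) ∈ F.I m) :
    ((m : ℕ) : ℝ≥0∞) / ((n + 1 : ℕ) : ℝ≥0∞) ≤ ENNReal.ofReal α * FA.nubar f := by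
  set j : ℕ → ℕ := fun k => ⌊(((k + 1) * m : ℕ) : ℝ) / α⌋₊ with hjdef
  set v : ℕ → ℝ := fun k => α * (j k : ℝ) / (((n + 1) * (k + 1) : ℕ) : ℝ) with hvdef
  have hαj : ∀ k, α * (j k : ℝ) ≤ (((k + 1) * m : ℕ) : ℝ) := by
    intro k
    have h0 : (0 : ℝ) ≤ (((k + 1) * m : ℕ) : ℝ) / α := by positivity
    have h1 : (j k : ℝ) ≤ (((k + 1) * m : ℕ) : ℝ) / α := Nat.floor_le h0
    rw [le_div_iff₀ hα] at h1
    linarith [h1]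
  have hbound : ∀ k : ℕ, ENNReal.ofReal (v k) ≤ ENNReal.ofReal α * FA.nubar f := by
    intro k
    have hceil : (⌈α * (j k : ℕ)⌉₊ : ℕ) ≤ (k + 1) * m := by
      refine Nat.ceil_le.2 ?_
      exact hαj k
    have hmem : f ^ ((n + 1) * (k + 1)) ∈ F.I ((k + 1) * m) := by
      have := F.pow_mem h (k + 1)
      rwa [← pow_mul] at this
    have hmem2 : f ^ ((n + 1) * (k + 1)) ∈ FA.I (j k) := by
      rw [hFA]
      exact F.antitone_I hceil hmem
    have hnu : ((j k : ℕ) : ℝ≥0∞) ≤ FA.nu (f ^ ((n + 1) * (k + 1))) := FA.le_nu hmem2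
    have hnubar : ((j k : ℕ) : ℝ≥0∞) / ((((n + 1) * (k + 1)) : ℕ) : ℝ≥0∞) ≤ FA.nubar f := by
      rw [FA.nubar_eq_iSup]
      refine le_trans ?_ (le_iSup _ ((n + 1) * (k + 1) - 1))
      have he : (n + 1) * (k + 1) - 1 + 1 = (n + 1) * (k + 1) := by
        have : 1 ≤ (n + 1) * (k + 1) := Nat.one_le_iff_ne_zero.2 (by positivity)
        omega
      rw [he]
      exact ENNReal.div_le_div_right hnu _
    have hof : ENNReal.ofReal (v k) =
        ENNReal.ofReal α * (((j k : ℕ) : ℝ≥0∞) / ((((n + 1) * (k + 1)) : ℕ) : ℝ≥0∞)) := by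
      rw [hvdef]
      have hD : (0 : ℝ) < (((n + 1) * (k + 1) : ℕ) : ℝ) := by positivity
      rw [ENNReal.ofReal_div_of_pos hD, ENNReal.ofReal_mul hα.le,
        ENNReal.ofReal_natCast, ENNReal.ofReal_natCast, mul_div_assoc]
    rw [hof]
    exact mul_le_mul_right hnubar _
  have hreal : Filter.Tendsto v Filter.atTop (𝓝 ((m : ℝ) / ((n + 1 : ℕ) : ℝ))) := by
    have hlow : Filter.Tendsto
        (fun k : ℕ => (m : ℝ) / ((n + 1 : ℕ) : ℝ) - (α / ((n + 1 : ℕ) : ℝ)) * (1 / ((k : ℝ) + 1)))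
        Filter.atTop (𝓝 ((m : ℝ) / ((n + 1 : ℕ) : ℝ))) := by
      have h0 : Filter.Tendsto (fun k : ℕ => (α / ((n + 1 : ℕ) : ℝ)) * (1 / ((k : ℝ) + 1)))
          Filter.atTop (𝓝 0) := by
        have := tendsto_one_div_add_atTop_nhds_zero_nat.const_mul (α / ((n + 1 : ℕ) : ℝ))
        simpa using this
      simpa using (tendsto_const_nhds.sub h0)
    refine tendsto_of_tendsto_of_tendsto_of_le_of_le hlow tendsto_const_nhds ?_ ?_
    · intro k
      have hD : (0 : ℝ) < (((n + 1) * (k + 1) : ℕ) : ℝ) := by positivity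
      have hfl : (((k + 1) * m : ℕ) : ℝ) / α - 1 < (j k : ℝ) := Nat.sub_one_lt_floor _
      have h1 : (((k + 1) * m : ℕ) : ℝ) - α ≤ α * (j k : ℝ) := by
        have h2 : (((k + 1) * m : ℕ) : ℝ) / α < (j k : ℝ) + 1 := by linarith
        have h3 : (((k + 1) * m : ℕ) : ℝ) < ((j k : ℝ) + 1) * α := (div_lt_iff₀ hα).1 h2
        nlinarith
      rw [hvdef]
      simp only
      rw [le_div_iff₀ hD]
      have hn1 : (0 : ℝ) < (n : ℝ) + 1 := by positivity
      have hk1 : (0 : ℝ) < (k : ℝ) + 1 := by positivity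
      have heq : ((m : ℝ) / ((n + 1 : ℕ) : ℝ) - (α / ((n + 1 : ℕ) : ℝ)) * (1 / ((k : ℝ) + 1))) *
          (((n + 1) * (k + 1) : ℕ) : ℝ) = (((k + 1) * m : ℕ) : ℝ) - α := by
        push_cast
        field_simp
      rw [heq]
      exact h1
    · intro k
      have hD : (0 : ℝ) < (((n + 1) * (k + 1) : ℕ) : ℝ) := by positivity
      rw [hvdef]
      simp only
      rw [div_le_iff₀ hD]
      have heq : (m : ℝ) / ((n + 1 : ℕ) : ℝ) * (((n + 1) * (k + 1) : ℕ) : ℝ) =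
          (((k + 1) * m : ℕ) : ℝ) := by
        push_cast
        field_simp
      rw [heq]
      exact hαj k
  have hlim : Filter.Tendsto (fun k => ENNReal.ofReal (v k)) Filter.atTop
      (𝓝 (((m : ℕ) : ℝ≥0∞) / ((n + 1 : ℕ) : ℝ≥0∞))) := by
    have := ENNReal.tendsto_ofReal hreal
    have heq : ENNReal.ofReal ((m : ℝ) / ((n + 1 : ℕ) : ℝ)) =
        ((m : ℕ) : ℝ≥0∞) / ((n + 1 : ℕ) : ℝ≥0∞) := by
      rw [ENNReal.ofReal_div_of_pos (by positivity), ENNReal.ofReal_natCast,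
        ENNReal.ofReal_natCast]
    rwa [heq] at this
  exact le_of_tendsto hlim (Filter.Eventually.of_forall hbound)

lemma twist_nubar_eq (F FA : RingFiltration R) (α : ℝ) (hα : 0 < α)
    (hFA : ∀ m : ℕ, FA.I m = F.I ⌈α * m⌉₊) (f : R) :
    ENNReal.ofReal α * FA.nubar f = F.nubar f := by
  apply le_antisymm
  · rw [FA.nubar_eq_iSup, F.nubar_eq_iSup, ENNReal.mul_iSup]
    refine iSup_le fun n => le_trans ?_ (le_iSup _ n)
    rw [← mul_div_assoc]
    exact ENNReal.div_le_div_right (nu_twist_le F FA α hα hFA _) _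
  · rw [F.nubar_eq_iSup]
    refine iSup_le fun n => ?_
    rw [ENNReal.div_le_iff (by simp) (by simp)]
    refine sSup_le ?_
    rintro x ⟨m, hm, rfl⟩
    rw [← ENNReal.div_le_iff (by simp) (by simp)]
    exact div_le_twist_nubar F FA α hα hFA f n m hm

lemma ennreal_le_aux {x y : ℝ≥0∞}
    (h : ∀ m k : ℕ, (m : ℝ≥0∞) ≤ ((k + 1 : ℕ) : ℝ≥0∞) * x →
      (m : ℝ≥0∞) ≤ ((k + 1 : ℕ) : ℝ≥0∞) * y) : x ≤ y := by
  refine ENNReal.le_of_forall_nnreal_lt fun r hr => ?_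
  by_cases hx : x = ∞
  · have h1 : ((⌈(r : ℝ)⌉₊ : ℕ) : ℝ≥0∞) ≤ ((0 + 1 : ℕ) : ℝ≥0∞) * y :=
      h _ 0 (by simp [hx])
    calc (r : ℝ≥0∞) ≤ ((⌈(r : ℝ)⌉₊ : ℕ) : ℝ≥0∞) := by
          rw [← ENNReal.ofReal_natCast, ← ENNReal.ofReal_coe_nnreal]
          exact ENNReal.ofReal_le_ofReal (Nat.le_ceil _)
      _ ≤ y := by simpa using h1
  · have hrx : (r : ℝ) < x.toReal := by
      have := (ENNReal.toReal_lt_toReal (by simp) hx).2 hr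
      simpa using this
    obtain ⟨k, hk⟩ := exists_nat_one_div_lt (sub_pos.2 hrx)
    set m : ℕ := ⌈(r : ℝ) * ((k : ℝ) + 1)⌉₊ with hmdef
    have hk1 : (0 : ℝ) < (k : ℝ) + 1 := by positivity
    have hmlt : (m : ℝ) ≤ ((k : ℝ) + 1) * x.toReal := by
      have h1 : (m : ℝ) < (r : ℝ) * ((k : ℝ) + 1) + 1 := Nat.ceil_lt_add_one (by positivity)
      have h2 : 1 / ((k : ℝ) + 1) < x.toReal - (r : ℝ) := hk
      have h3 : 1 < (x.toReal - (r : ℝ)) * ((k : ℝ) + 1) := by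
        rw [div_lt_iff₀ hk1] at h2
        linarith
      nlinarith
    have hm2 : (m : ℝ≥0∞) ≤ ((k + 1 : ℕ) : ℝ≥0∞) * x := by
      rw [← ENNReal.ofReal_toReal hx, ← ENNReal.ofReal_natCast m,
        ← ENNReal.ofReal_natCast (k + 1), ← ENNReal.ofReal_mul (by positivity)]
      refine ENNReal.ofReal_le_ofReal ?_
      push_cast
      linarith [hmlt]
    have h3 := h m k hm2
    have h4 : (r : ℝ≥0∞) ≤ (m : ℝ≥0∞) / ((k + 1 : ℕ) : ℝ≥0∞) := by
      rw [← ENNReal.ofReal_coe_nnreal, ← ENNReal.ofReal_natCast m,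
        ← ENNReal.ofReal_natCast (k + 1), ← ENNReal.ofReal_div_of_pos (by positivity)]
      refine ENNReal.ofReal_le_ofReal ?_
      rw [le_div_iff₀ (by positivity)]
      push_cast
      exact Nat.le_ceil _
    calc (r : ℝ≥0∞) ≤ (m : ℝ≥0∞) / ((k + 1 : ℕ) : ℝ≥0∞) := h4
      _ ≤ (((k + 1 : ℕ) : ℝ≥0∞) * y) / ((k + 1 : ℕ) : ℝ≥0∞) := ENNReal.div_le_div_right h3 _
      _ = y := by rw [mul_div_assoc, ENNReal.mul_div_cancel' (by simp) (by simp)]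

end Twist


/-- For filtrations `I`, `J` of a Noetherian ring `R` and real `α > 0`:
`ν̄_I = α·ν̄_J` iff `K(I^(α)) = K(J)`, where `I^(α)_m = I_{⌈αm⌉}` and
`K(F)_m = {f : ν̄_F(f) ≥ m}`. -/
theorem nubar_eq_iff_saturation_eq {R : Type*} [CommRing R] [IsNoetherianRing R]
    (F G FA : RingFiltration R) (α : ℝ) (hα : 0 < α)
    (hFA : ∀ m : ℕ, FA.I m = F.I ⌈α * m⌉₊) :
    (∀ f, F.nubar f = ENNReal.ofReal α * G.nubar f) ↔
      (∀ m : ℕ, {f : R | (m : ℝ≥0∞) ≤ FA.nubar f} = {f : R | (m : ℝ≥0∞) ≤ G.nubar f}) := by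
  have ha0 : ENNReal.ofReal α ≠ 0 := (ENNReal.ofReal_pos.2 hα).ne'
  have hatop : ENNReal.ofReal α ≠ ∞ := ENNReal.ofReal_ne_top
  have key : ∀ f : R, ENNReal.ofReal α * FA.nubar f = F.nubar f :=
    twist_nubar_eq F FA α hα hFA
  constructor
  · intro h m
    ext f
    have heq : FA.nubar f = G.nubar f := by
      have h1 := key f
      rw [h f] at h1
      exact (ENNReal.mul_right_inj ha0 hatop).1 h1
    simp only [Set.mem_setOf_eq, heq]
  · intro h f
    have heq : FA.nubar f = G.nubar f := by
      apply le_antisymm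
      · apply ennreal_le_aux
        intro m k hm
        rw [← FA.nubar_pow f k] at hm
        have hmem : f ^ (k + 1) ∈ {g : R | (m : ℝ≥0∞) ≤ FA.nubar g} := hm
        rw [h m] at hmem
        rw [← G.nubar_pow f k]
        exact hmem
      · apply ennreal_le_aux
        intro m k hm
        rw [← G.nubar_pow f k] at hm
        have hmem : f ^ (k + 1) ∈ {g : R | (m : ℝ≥0∞) ≤ G.nubar g} := hm
        rw [← h m] at hmem
        rw [← FA.nubar_pow f k]
        exact hmem
    rw [← key f, heq]
end
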